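/- Let δ be a positive integer and R ≥ 2 a real. Then ∑_{a ≤ R, δ ∣ a} σ₋₁(a)·a^{3/2} = (π²/15)·(R^{5/2}/δ)·∑_{τ ∣ δ} φ(τ)/τ² + O_ε(R^{3/2+ε} δ^{ε}) for every ε > 0; i.e., for each ε > 0 there is C_ε such that |∑_{a ≤ R, δ ∣ a} σ₋₁(a) a^{3/2} − (π²/15)(R^{5/2}/δ)∑_{τ∣δ} φ(τ)/τ²| ≤ C_ε R^{3/2+ε} δ^{ε}. -/

import Mathlib

open Finset Real Filter Topology

lemma hasDeriv52 (x : ℝ) : HasDerivAt (fun t : ℝ => t ^ ((5:ℝ)/2)) ((5/2) * x ^ ((3:ℝ)/2)) x := by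
  have h := Real.hasDerivAt_rpow_const (x := x) (p := (5:ℝ)/2) (Or.inr (by norm_num))
  convert h using 2
  norm_num

lemma mvt_upper {a b : ℝ} (ha : 0 ≤ a) (hab : a ≤ b) :
    b ^ ((5:ℝ)/2) - a ^ ((5:ℝ)/2) ≤ 5/2 * (b - a) * b ^ ((3:ℝ)/2) := by
  rcases eq_or_lt_of_le hab with rfl | hlt
  · simp
  obtain ⟨c, hc, hceq⟩ := exists_hasDerivAt_eq_slope (fun t : ℝ => t ^ ((5:ℝ)/2))
    (fun t => (5/2) * t ^ ((3:ℝ)/2)) hlt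
    (fun x _ => ((hasDeriv52 x).continuousAt).continuousWithinAt)
    (fun x _ => hasDeriv52 x)
  have hc0 : 0 ≤ c := le_of_lt (lt_of_le_of_lt ha hc.1)
  rw [eq_div_iff (sub_ne_zero.mpr (ne_of_gt hlt))] at hceq
  rw [← hceq]
  have hcb : c ^ ((3:ℝ)/2) ≤ b ^ ((3:ℝ)/2) :=
    Real.rpow_le_rpow hc0 (le_of_lt hc.2) (by norm_num)
  nlinarith [sub_pos.mpr hlt]

lemma mvt_lower {a b : ℝ} (ha : 0 ≤ a) (hab : a ≤ b) :
    5/2 * (b - a) * a ^ ((3:ℝ)/2) ≤ b ^ ((5:ℝ)/2) - a ^ ((5:ℝ)/2) := by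
  rcases eq_or_lt_of_le hab with rfl | hlt
  · simp
  obtain ⟨c, hc, hceq⟩ := exists_hasDerivAt_eq_slope (fun t : ℝ => t ^ ((5:ℝ)/2))
    (fun t => (5/2) * t ^ ((3:ℝ)/2)) hlt
    (fun x _ => ((hasDeriv52 x).continuousAt).continuousWithinAt)
    (fun x _ => hasDeriv52 x)
  rw [eq_div_iff (sub_ne_zero.mpr (ne_of_gt hlt))] at hceq
  rw [← hceq]
  have hca : a ^ ((3:ℝ)/2) ≤ c ^ ((3:ℝ)/2) :=
    Real.rpow_le_rpow ha (le_of_lt hc.1) (by norm_num)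
  nlinarith [sub_pos.mpr hlt]

lemma Tlow (M : ℕ) : 2/5 * (M:ℝ) ^ ((5:ℝ)/2) ≤ ∑ k ∈ Icc 1 M, (k:ℝ) ^ ((3:ℝ)/2) := by
  induction M with
  | zero => simp
  | succ n ih =>
    rw [Finset.sum_Icc_succ_top (by omega : 1 ≤ n + 1)]
    have h := mvt_upper (a := (n:ℝ)) (b := (n:ℝ)+1) (Nat.cast_nonneg n) (by linarith)
    push_cast
    push_cast at ih
    linarith

lemma Tup (M : ℕ) : ∑ k ∈ Icc 1 M, (k:ℝ) ^ ((3:ℝ)/2) ≤ 2/5 * (((M:ℝ)+1) ^ ((5:ℝ)/2) - 1) := by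
  induction M with
  | zero => simp
  | succ n ih =>
    rw [Finset.sum_Icc_succ_top (by omega : 1 ≤ n + 1)]
    have h := mvt_lower (a := (n:ℝ)+1) (b := (n:ℝ)+2) (by positivity) (by linarith)
    push_cast
    push_cast at ih
    have e : ((n:ℝ) + 1 + 1) ^ ((5:ℝ)/2) = ((n:ℝ)+2) ^ ((5:ℝ)/2) := by ring_nf
    rw [e]
    linarith

lemma two_rpow_32 : (2:ℝ) ^ ((3:ℝ)/2) ≤ 3 := by
  have h8 : ((2:ℝ) ^ ((3:ℝ)/2)) ^ (2:ℕ) = 8 := by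
    rw [← Real.rpow_natCast ((2:ℝ) ^ ((3:ℝ)/2)), ← Real.rpow_mul (by norm_num)]
    norm_num
  nlinarith [Real.rpow_nonneg (by norm_num : (0:ℝ) ≤ 2) ((3:ℝ)/2)]

lemma partial_sum_close {X : ℝ} (hX : 0 ≤ X) :
    |(∑ k ∈ Icc 1 ⌊X⌋₊, (k:ℝ) ^ ((3:ℝ)/2)) - 2/5 * X ^ ((5:ℝ)/2)| ≤ 3 * X ^ ((3:ℝ)/2) := by
  have hX32 : 0 ≤ X ^ ((3:ℝ)/2) := Real.rpow_nonneg hX _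
  rcases lt_or_ge X 1 with hX1 | hX1
  · have hM : ⌊X⌋₊ = 0 := Nat.floor_eq_zero.mpr hX1
    rw [hM]
    simp only [Finset.Icc_eq_empty_of_lt (by omega : (0:ℕ) < 1), Finset.sum_empty]
    rw [abs_le]
    have h52 : X ^ ((5:ℝ)/2) ≤ X ^ ((3:ℝ)/2) := by
      rcases eq_or_lt_of_le hX with rfl | hX0
      · rw [Real.zero_rpow (by norm_num), Real.zero_rpow (by norm_num)]
      · exact Real.rpow_le_rpow_of_exponent_ge hX0 (le_of_lt hX1) (by norm_num)
    have h52n : 0 ≤ X ^ ((5:ℝ)/2) := Real.rpow_nonneg hX _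
    constructor <;> nlinarith
  · set M := ⌊X⌋₊ with hMdef
    have hMX : (M:ℝ) ≤ X := Nat.floor_le hX
    have hXM : X < (M:ℝ) + 1 := Nat.lt_floor_add_one X
    have hM0 : 0 ≤ (M:ℝ) := Nat.cast_nonneg M
    have hlow := Tlow M
    have hup := Tup M
    have h1 := mvt_upper hM0 hMX
    have h2 := mvt_upper hX hXM.le
    have hM1 : ((M:ℝ)+1) ^ ((3:ℝ)/2) ≤ 3 * X ^ ((3:ℝ)/2) := by
      have h2X : ((M:ℝ)+1) ≤ 2 * X := by
        have : (1:ℝ) ≤ X := hX1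
        linarith
      calc ((M:ℝ)+1) ^ ((3:ℝ)/2) ≤ (2*X) ^ ((3:ℝ)/2) :=
            Real.rpow_le_rpow (by positivity) h2X (by norm_num)
        _ = 2 ^ ((3:ℝ)/2) * X ^ ((3:ℝ)/2) := Real.mul_rpow (by norm_num) hX
        _ ≤ 3 * X ^ ((3:ℝ)/2) := by nlinarith [two_rpow_32]
    rw [abs_le]
    constructor
    · -- lower:  2/5 M^{5/2} - 2/5 X^{5/2} ≥ -X^{3/2}
      have hXle : 5/2 * (X - M) * X ^ ((3:ℝ)/2) ≤ 5/2 * X ^ ((3:ℝ)/2) := by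
        nlinarith
      nlinarith
    · have hXle : 5/2 * ((M:ℝ)+1 - X) * ((M:ℝ)+1) ^ ((3:ℝ)/2) ≤ 5/2 * ((M:ℝ)+1) ^ ((3:ℝ)/2) := by
        nlinarith [Real.rpow_nonneg (by positivity : (0:ℝ) ≤ (M:ℝ)+1) ((3:ℝ)/2)]
      nlinarith

lemma reindex (δ : ℕ) (hδ : 0 < δ) (N : ℕ) :
    ∑ a ∈ (Finset.Icc 1 N).filter (fun a => δ ∣ a),
      (∑ d ∈ a.divisors, (1:ℝ)/d) * (a:ℝ) ^ ((3:ℝ)/2)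
    = ∑ d ∈ Finset.Icc 1 N, (1:ℝ)/d *
        ∑ k ∈ Finset.Icc 1 (N / Nat.lcm d δ), ((k * Nat.lcm d δ : ℕ) : ℝ) ^ ((3:ℝ)/2) := by
  simp_rw [Finset.sum_mul, Finset.mul_sum]
  rw [Finset.sum_sigma', Finset.sum_sigma']
  refine Finset.sum_nbij' (fun x : Σ _ : ℕ, ℕ => (⟨x.2, x.1 / Nat.lcm x.2 δ⟩ : Σ _ : ℕ, ℕ))
    (fun y : Σ _ : ℕ, ℕ => (⟨y.2 * Nat.lcm y.1 δ, y.1⟩ : Σ _ : ℕ, ℕ)) ?_ ?_ ?_ ?_ ?_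
  · rintro ⟨a, d⟩ hx
    simp only [Finset.mem_sigma, Finset.mem_filter, Finset.mem_Icc, Nat.mem_divisors] at hx ⊢
    obtain ⟨⟨⟨ha1, haN⟩, hda⟩, hd, ha0⟩ := hx
    have hd0 : 0 < d := Nat.pos_of_dvd_of_pos hd ha1
    have hL0 : 0 < Nat.lcm d δ := Nat.pos_of_ne_zero (Nat.lcm_ne_zero hd0.ne' hδ.ne')
    have hLa : Nat.lcm d δ ∣ a := Nat.lcm_dvd hd hda
    refine ⟨⟨hd0, le_trans (Nat.le_of_dvd ha1 hd) haN⟩, ?_, Nat.div_le_div_right haN⟩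
    rw [Nat.one_le_div_iff hL0]
    exact Nat.le_of_dvd ha1 hLa
  · rintro ⟨d, k⟩ hy
    simp only [Finset.mem_sigma, Finset.mem_filter, Finset.mem_Icc, Nat.mem_divisors] at hy ⊢
    obtain ⟨⟨hd1, hdN⟩, hk1, hkN⟩ := hy
    have hL0 : 0 < Nat.lcm d δ := Nat.pos_of_ne_zero (Nat.lcm_ne_zero (by omega) hδ.ne')
    have hkL : k * Nat.lcm d δ ≤ N := (Nat.le_div_iff_mul_le hL0).mp hkN
    refine ⟨⟨⟨?_, hkL⟩, dvd_mul_of_dvd_right (Nat.dvd_lcm_right d δ) k⟩,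
      dvd_mul_of_dvd_right (Nat.dvd_lcm_left d δ) k, by positivity⟩
    exact Nat.one_le_iff_ne_zero.mpr (by positivity)
  · rintro ⟨a, d⟩ hx
    simp only [Finset.mem_sigma, Finset.mem_filter, Finset.mem_Icc, Nat.mem_divisors] at hx
    obtain ⟨⟨⟨ha1, haN⟩, hda⟩, hd, ha0⟩ := hx
    have hLa : Nat.lcm d δ ∣ a := Nat.lcm_dvd hd hda
    have h : a / Nat.lcm d δ * Nat.lcm d δ = a := Nat.div_mul_cancel hLa
    simp [h]
  · rintro ⟨d, k⟩ hy
    simp only [Finset.mem_sigma, Finset.mem_filter, Finset.mem_Icc, Nat.mem_divisors] at hy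
    obtain ⟨⟨hd1, hdN⟩, hk1, hkN⟩ := hy
    have hL0 : 0 < Nat.lcm d δ := Nat.pos_of_ne_zero (Nat.lcm_ne_zero (by omega) hδ.ne')
    have h : k * Nat.lcm d δ / Nat.lcm d δ = k := Nat.mul_div_cancel k hL0
    simp [h]
  · rintro ⟨a, d⟩ hx
    simp only [Finset.mem_sigma, Finset.mem_filter, Finset.mem_Icc, Nat.mem_divisors] at hx
    obtain ⟨⟨⟨ha1, haN⟩, hda⟩, hd, ha0⟩ := hx
    have hLa : Nat.lcm d δ ∣ a := Nat.lcm_dvd hd hda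
    have h : a / Nat.lcm d δ * Nat.lcm d δ = a := Nat.div_mul_cancel hLa
    simp only []
    rw [h]

lemma hasSum_ind (τ : ℕ) (hτ : 0 < τ) (c : ℝ) :
    HasSum (fun d : ℕ => (if τ ∣ d then c else 0) / (d:ℝ)^2) (c / (τ:ℝ)^2 * (π^2/6)) := by
  have hi : Function.Injective (fun m : ℕ => τ * m) :=
    fun a b h => by simpa [Nat.mul_left_cancel_iff hτ] using h
  have hf : ∀ x ∉ Set.range (fun m : ℕ => τ * m),
      (if τ ∣ x then c else 0) / (x:ℝ)^2 = 0 := by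
    intro x hx
    have : ¬ τ ∣ x := by
      intro ⟨m, hm⟩; exact hx ⟨m, hm.symm⟩
    simp [this]
  rw [← Function.Injective.hasSum_iff hi hf]
  have h0 : HasSum (fun m : ℕ => c / (τ:ℝ)^2 * ((1:ℝ) / (m:ℝ)^2)) (c / (τ:ℝ)^2 * (π^2/6)) :=
    hasSum_zeta_two.mul_left _
  convert h0 using 2 with m
  have : τ ∣ τ * m := Dvd.intro m rfl
  simp only [Function.comp_apply, this, if_true]
  push_cast
  rw [div_mul_div_comm]
  ring_nf

lemma gcd_eq_sum (δ : ℕ) (hδ : 0 < δ) (d : ℕ) :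
    (Nat.gcd d δ : ℝ) / (d:ℝ)^2
      = ∑ τ ∈ δ.divisors, (if τ ∣ d then (Nat.totient τ : ℝ) else 0) / (d:ℝ)^2 := by
  rcases Nat.eq_zero_or_pos d with rfl | hd
  · simp
  rw [← Finset.sum_div]
  congr 1
  have : ((δ.divisors.filter (fun τ => τ ∣ d)) : Finset ℕ) = (Nat.gcd d δ).divisors := by
    ext τ
    simp only [Finset.mem_filter, Nat.mem_divisors, Nat.dvd_gcd_iff]
    constructor
    · rintro ⟨⟨h1, _⟩, h2⟩; exact ⟨⟨h2, h1⟩, Nat.gcd_ne_zero_left hd.ne'⟩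
    · rintro ⟨⟨h1, h2⟩, _⟩; exact ⟨⟨h2, hδ.ne'⟩, h1⟩
  rw [← Finset.sum_filter, this]
  rw [← Nat.cast_sum]
  rw [Nat.sum_totient]

lemma gcd_hasSum (δ : ℕ) (hδ : 0 < δ) :
    HasSum (fun d : ℕ => (Nat.gcd d δ : ℝ) / (d:ℝ)^2)
      (π^2/6 * ∑ τ ∈ δ.divisors, (Nat.totient τ : ℝ) / (τ:ℝ)^2) := by
  have h : HasSum (fun d : ℕ => ∑ τ ∈ δ.divisors, (if τ ∣ d then (Nat.totient τ : ℝ) else 0) / (d:ℝ)^2)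
      (∑ τ ∈ δ.divisors, (Nat.totient τ : ℝ) / (τ:ℝ)^2 * (π^2/6)) :=
    hasSum_sum fun τ hτ => hasSum_ind τ (Nat.pos_of_mem_divisors hτ) _
  have e1 : (fun d : ℕ => (Nat.gcd d δ : ℝ) / (d:ℝ)^2)
      = fun d => ∑ τ ∈ δ.divisors, (if τ ∣ d then (Nat.totient τ : ℝ) else 0) / (d:ℝ)^2 :=
    funext (gcd_eq_sum δ hδ)
  rw [e1]
  convert h using 1
  rw [Finset.mul_sum]
  exact Finset.sum_congr rfl (fun τ _ => mul_comm _ _)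

lemma telescope_hasSum (N : ℕ) (hN : 0 < N) (δ : ℕ) :
    HasSum (fun i : ℕ => (δ:ℝ) * ((1:ℝ)/((i:ℝ)+N) - 1/((i:ℝ)+N+1))) ((δ:ℝ)/N) := by
  set u : ℕ → ℝ := fun i => (δ:ℝ)/((i:ℝ)+N) with hu
  have hterm : ∀ i : ℕ, (δ:ℝ) * ((1:ℝ)/((i:ℝ)+N) - 1/((i:ℝ)+N+1)) = u i - u (i+1) := by
    intro i; simp only [hu]; push_cast; ring
  have hpos : ∀ i : ℕ, (0:ℝ) < (i:ℝ)+N := by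
    intro i; have : (1:ℝ) ≤ (N:ℝ) := by exact_mod_cast hN
    positivity
  have hnonneg : ∀ i : ℕ, 0 ≤ u i - u (i+1) := by
    intro i
    have h1 := hpos i
    simp only [hu]
    rw [sub_nonneg]
    push_cast
    gcongr
    linarith
  have htend : Tendsto u atTop (𝓝 0) := by
    have h1 : Tendsto (fun i : ℕ => ((i:ℝ)+N)) atTop atTop :=
      tendsto_atTop_add_const_right _ _ tendsto_natCast_atTop_atTop
    simpa [hu] using Tendsto.div_atTop tendsto_const_nhds h1
  have key : Tendsto (fun n => ∑ i ∈ range n, (u i - u (i+1))) atTop (𝓝 ((δ:ℝ)/N)) := by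
    simp_rw [Finset.sum_range_sub' u]
    have : Tendsto (fun n => u 0 - u n) atTop (𝓝 (u 0 - 0)) := tendsto_const_nhds.sub htend
    simpa [hu] using this
  have := (hasSum_iff_tendsto_nat_of_nonneg hnonneg ((δ:ℝ)/N)).mpr key
  simpa only [← hterm] using this

set_option maxHeartbeats 1000000 in
lemma tail_bound (δ : ℕ) (hδ : 0 < δ) (N : ℕ) (hN : 0 < N) :
    |(∑ d ∈ Finset.Icc 1 N, (Nat.gcd d δ : ℝ)/(d:ℝ)^2)
      - π^2/6 * ∑ τ ∈ δ.divisors, (Nat.totient τ:ℝ)/(τ:ℝ)^2| ≤ (δ:ℝ)/N := by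
  set f : ℕ → ℝ := fun d => (Nat.gcd d δ : ℝ)/(d:ℝ)^2 with hf
  have hsum := gcd_hasSum δ hδ
  set T := π^2/6 * ∑ τ ∈ δ.divisors, (Nat.totient τ:ℝ)/(τ:ℝ)^2 with hT
  have hsummable : Summable f := hsum.summable
  have htsum : ∑' d, f d = T := hsum.tsum_eq
  have hsplit := Summable.sum_add_tsum_nat_add (f := f) (N+1) hsummable
  have hIcc : ∑ d ∈ Finset.range (N+1), f d = ∑ d ∈ Finset.Icc 1 N, f d := by
    rw [Finset.range_eq_Ico, Finset.sum_eq_sum_Ico_succ_bot (by omega)]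
    have h0 : f 0 = 0 := by simp [hf]
    rw [h0, zero_add, Finset.Ico_add_one_right_eq_Icc]
  have hg := telescope_hasSum N hN δ
  have hfnonneg : ∀ i, 0 ≤ f i := fun i => by positivity
  have htail_nonneg : 0 ≤ ∑' i, f (i+(N+1)) := tsum_nonneg fun i => hfnonneg _
  have htail_le : ∑' i, f (i+(N+1)) ≤ (δ:ℝ)/N := by
    rw [← hg.tsum_eq]
    refine Summable.tsum_le_tsum (fun i => ?_) ((_root_.summable_nat_add_iff (N+1)).mpr hsummable) hg.summable
    have hcast : ((i+(N+1):ℕ):ℝ) = (i:ℝ)+N+1 := by push_cast; ring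
    have hy : (1:ℝ) ≤ (i:ℝ)+N := by
      have : (1:ℝ) ≤ (N:ℝ) := by exact_mod_cast hN
      have : (0:ℝ) ≤ (i:ℝ) := Nat.cast_nonneg i
      linarith
    calc f (i+(N+1)) = (Nat.gcd (i+(N+1)) δ : ℝ) / ((i:ℝ)+N+1)^2 := by
          simp only [hf]
          rw [hcast]
      _ ≤ (δ:ℝ) / ((i:ℝ)+N+1)^2 := by
          gcongr
          exact_mod_cast Nat.gcd_le_right _ hδ
      _ ≤ (δ:ℝ) * ((1:ℝ)/((i:ℝ)+N) - 1/((i:ℝ)+N+1)) := by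
          have he : (1:ℝ)/((i:ℝ)+N) - 1/((i:ℝ)+N+1) = 1/(((i:ℝ)+N)*((i:ℝ)+N+1)) := by
            field_simp
            ring
          rw [he, mul_one_div]
          have h2 : ((i:ℝ)+N)*((i:ℝ)+N+1) ≤ ((i:ℝ)+N+1)^2 := by nlinarith
          have h3 : (0:ℝ) < ((i:ℝ)+N)*((i:ℝ)+N+1) := by nlinarith
          gcongr
  have key : (∑ d ∈ Finset.Icc 1 N, f d) - T = -(∑' i, f (i+(N+1))) := by
    rw [← hIcc, ← htsum, ← hsplit]; ring
  rw [key, abs_neg, abs_of_nonneg htail_nonneg]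
  exact htail_le

lemma per_d (δ : ℕ) (hδ : 0 < δ) (R : ℝ) (hR : 2 ≤ R) (d : ℕ) (hd : 0 < d) :
    |(1:ℝ)/d * ∑ k ∈ Finset.Icc 1 (⌊R⌋₊ / Nat.lcm d δ), ((k * Nat.lcm d δ : ℕ):ℝ) ^ ((3:ℝ)/2)
      - 2/5 * R ^ ((5:ℝ)/2) * ((Nat.gcd d δ : ℝ)/((d:ℝ)^2 * (δ:ℝ)))|
      ≤ 3 * R ^ ((3:ℝ)/2) * (1/d) := by
  set L := Nat.lcm d δ with hLdef
  have hL : 0 < L := Nat.pos_of_ne_zero (Nat.lcm_ne_zero hd.ne' hδ.ne')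
  have hR0 : (0:ℝ) < R := by linarith
  have hLR : (0:ℝ) < (L:ℝ) := by exact_mod_cast hL
  set X := R / (L:ℝ) with hXdef
  have hX0 : 0 ≤ X := by positivity
  have hfloor : ⌊R⌋₊ / L = ⌊X⌋₊ := (Nat.floor_div_natCast R L).symm
  have hW : ∑ k ∈ Finset.Icc 1 (⌊R⌋₊ / L), ((k * L : ℕ):ℝ) ^ ((3:ℝ)/2)
      = (L:ℝ) ^ ((3:ℝ)/2) * ∑ k ∈ Finset.Icc 1 ⌊X⌋₊, (k:ℝ) ^ ((3:ℝ)/2) := by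
    rw [hfloor, Finset.mul_sum]
    refine Finset.sum_congr rfl fun k _ => ?_
    have : ((k * L : ℕ):ℝ) = (k:ℝ) * (L:ℝ) := by push_cast; ring
    rw [this, Real.mul_rpow (Nat.cast_nonneg k) (Nat.cast_nonneg L)]
    ring
  set A := ∑ k ∈ Finset.Icc 1 ⌊X⌋₊, (k:ℝ) ^ ((3:ℝ)/2) with hA
  have h1 := partial_sum_close hX0
  have hX52 : X ^ ((5:ℝ)/2) = R ^ ((5:ℝ)/2) / (L:ℝ) ^ ((5:ℝ)/2) :=
    Real.div_rpow hR0.le (Nat.cast_nonneg L) _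
  have hX32 : X ^ ((3:ℝ)/2) = R ^ ((3:ℝ)/2) / (L:ℝ) ^ ((3:ℝ)/2) :=
    Real.div_rpow hR0.le (Nat.cast_nonneg L) _
  have hL52 : (L:ℝ) ^ ((5:ℝ)/2) = (L:ℝ) * (L:ℝ) ^ ((3:ℝ)/2) := by
    rw [show ((5:ℝ)/2) = 1 + 3/2 by norm_num, Real.rpow_add hLR, Real.rpow_one]
  have hL32 : (0:ℝ) < (L:ℝ) ^ ((3:ℝ)/2) := Real.rpow_pos_of_pos hLR _
  have hdR : (0:ℝ) < (d:ℝ) := by exact_mod_cast hd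
  have e0 : (Nat.gcd d δ : ℝ)/((d:ℝ)^2 * (δ:ℝ)) = 1/((d:ℝ)*(L:ℝ)) := by
    have hcast : (Nat.gcd d δ : ℝ) * (L:ℝ) = (d:ℝ) * (δ:ℝ) := by
      exact_mod_cast congrArg (Nat.cast : ℕ → ℝ) (Nat.gcd_mul_lcm d δ)
    have hδR : (0:ℝ) < (δ:ℝ) := by exact_mod_cast hδ
    rw [div_eq_div_iff (by positivity) (by positivity)]
    linear_combination (d:ℝ) * hcast
  have e1 : 2/5 * R ^ ((5:ℝ)/2) * ((Nat.gcd d δ : ℝ)/((d:ℝ)^2 * (δ:ℝ)))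
      = 1/(d:ℝ) * ((L:ℝ) ^ ((3:ℝ)/2) * (2/5 * X ^ ((5:ℝ)/2))) := by
    rw [e0, hX52, hL52]
    field_simp
  rw [hW, e1]
  have e2 : (1:ℝ)/d * ((L:ℝ) ^ ((3:ℝ)/2) * A) - 1/(d:ℝ) * ((L:ℝ) ^ ((3:ℝ)/2) * (2/5 * X ^ ((5:ℝ)/2)))
      = 1/(d:ℝ) * (L:ℝ) ^ ((3:ℝ)/2) * (A - 2/5 * X ^ ((5:ℝ)/2)) := by ring
  rw [e2, abs_mul, abs_of_nonneg (by positivity : (0:ℝ) ≤ 1/(d:ℝ) * (L:ℝ) ^ ((3:ℝ)/2))]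
  calc 1/(d:ℝ) * (L:ℝ) ^ ((3:ℝ)/2) * |A - 2/5 * X ^ ((5:ℝ)/2)|
      ≤ 1/(d:ℝ) * (L:ℝ) ^ ((3:ℝ)/2) * (3 * X ^ ((3:ℝ)/2)) := by
        apply mul_le_mul_of_nonneg_left h1 (by positivity)
    _ = 3 * R ^ ((3:ℝ)/2) * (1/d) := by
        rw [hX32]
        field_simp

set_option maxHeartbeats 1600000 in
theorem sum_sigma_neg_one_asymp (δ : ℕ) (hδ : 0 < δ) (ε : ℝ) (hε : 0 < ε) :
    ∃ C : ℝ, 0 < C ∧ ∀ R : ℝ, 2 ≤ R →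
      |(∑ a ∈ (Finset.Icc 1 ⌊R⌋₊).filter (fun a => δ ∣ a),
            (∑ d ∈ a.divisors, (1 : ℝ) / d) * (a : ℝ) ^ ((3 : ℝ) / 2)) -
          Real.pi ^ 2 / 15 * (R ^ ((5 : ℝ) / 2) / δ) *
            ∑ τ ∈ δ.divisors, (Nat.totient τ : ℝ) / (τ : ℝ) ^ 2| ≤
        C * R ^ ((3 : ℝ) / 2 + ε) * (δ : ℝ) ^ ε := by
  refine ⟨3*(1+1/ε) + 1, by positivity, fun R hR => ?_⟩
  have hR0 : (0:ℝ) < R := by linarith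
  have hR1 : (1:ℝ) ≤ R := by linarith
  set N := ⌊R⌋₊ with hNdef
  have hN2 : 2 ≤ N := Nat.le_floor (by exact_mod_cast hR)
  have hN0 : 0 < N := by omega
  have hNR : (N:ℝ) ≤ R := Nat.floor_le hR0.le
  have hNpos : (0:ℝ) < N := by exact_mod_cast hN0
  have hRN : R - 1 < (N:ℝ) := by
    have := Nat.lt_floor_add_one R
    rw [← hNdef] at this
    linarith
  have hNhalf : R/2 ≤ (N:ℝ) := by linarith
  have hδpos : (0:ℝ) < (δ:ℝ) := by exact_mod_cast hδ
  have hR32 : (0:ℝ) ≤ R ^ ((3:ℝ)/2) := Real.rpow_nonneg hR0.le _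
  have hR52 : (0:ℝ) ≤ R ^ ((5:ℝ)/2) := Real.rpow_nonneg hR0.le _
  rw [reindex δ hδ N]
  set Sig0 := ∑ τ ∈ δ.divisors, (Nat.totient τ : ℝ) / (τ : ℝ) ^ 2 with hSig0
  set M := ∑ d ∈ Finset.Icc 1 N, 2/5 * R ^ ((5:ℝ)/2) * ((Nat.gcd d δ : ℝ)/((d:ℝ)^2 * (δ:ℝ))) with hM
  -- step 1 : |S - M|
  have hSM : |(∑ d ∈ Finset.Icc 1 N, (1:ℝ)/d *
        ∑ k ∈ Finset.Icc 1 (N / Nat.lcm d δ), ((k * Nat.lcm d δ : ℕ) : ℝ) ^ ((3:ℝ)/2)) - M|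
      ≤ 3 * R ^ ((3:ℝ)/2) * (1 + Real.log R) := by
    rw [hM, ← Finset.sum_sub_distrib]
    refine (Finset.abs_sum_le_sum_abs _ _).trans ?_
    have hbound : ∀ d ∈ Finset.Icc 1 N,
        |(1:ℝ)/d * ∑ k ∈ Finset.Icc 1 (N / Nat.lcm d δ), ((k * Nat.lcm d δ : ℕ) : ℝ) ^ ((3:ℝ)/2)
          - 2/5 * R ^ ((5:ℝ)/2) * ((Nat.gcd d δ : ℝ)/((d:ℝ)^2 * (δ:ℝ)))|
          ≤ 3 * R ^ ((3:ℝ)/2) * (1/d) := by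
      intro d hd
      rw [Finset.mem_Icc] at hd
      exact per_d δ hδ R hR d (by omega)
    refine (Finset.sum_le_sum hbound).trans ?_
    rw [← Finset.mul_sum]
    have hharm : ∑ d ∈ Finset.Icc 1 N, (1:ℝ)/d ≤ 1 + Real.log N := by
      have h := harmonic_le_one_add_log N
      rw [harmonic_eq_sum_Icc] at h
      push_cast at h
      simpa [one_div] using h
    have hlog : Real.log N ≤ Real.log R := Real.log_le_log hNpos hNR
    have : ∑ d ∈ Finset.Icc 1 N, (1:ℝ)/d ≤ 1 + Real.log R := by linarith
    have h3 : (0:ℝ) ≤ 3 * R ^ ((3:ℝ)/2) := by positivity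
    exact mul_le_mul_of_nonneg_left this h3
  -- step 2 : |M - target|
  have hMT : |M - Real.pi ^ 2 / 15 * (R ^ ((5:ℝ)/2) / δ) * Sig0| ≤ R ^ ((3:ℝ)/2) := by
    have eM : M = 2/5 * (R ^ ((5:ℝ)/2) / δ) *
        ∑ d ∈ Finset.Icc 1 N, (Nat.gcd d δ : ℝ)/(d:ℝ)^2 := by
      rw [hM, Finset.mul_sum]
      refine Finset.sum_congr rfl fun d _ => ?_
      rw [← div_div]
      ring
    have eT : Real.pi ^ 2 / 15 * (R ^ ((5:ℝ)/2) / δ) * Sig0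
        = 2/5 * (R ^ ((5:ℝ)/2) / δ) * (π^2/6 * Sig0) := by ring
    rw [eM, eT, ← mul_sub]
    rw [abs_mul, abs_of_nonneg (by positivity : (0:ℝ) ≤ 2/5 * (R ^ ((5:ℝ)/2) / δ))]
    have htail := tail_bound δ hδ N hN0
    calc 2/5 * (R ^ ((5:ℝ)/2) / δ) * |_ - _| ≤ 2/5 * (R ^ ((5:ℝ)/2) / δ) * ((δ:ℝ)/N) := by
          exact mul_le_mul_of_nonneg_left htail (by positivity)
      _ ≤ R ^ ((3:ℝ)/2) := by
          have hR52R : R ^ ((5:ℝ)/2) = R * R ^ ((3:ℝ)/2) := by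
            rw [show ((5:ℝ)/2) = 1 + 3/2 by norm_num, Real.rpow_add hR0, Real.rpow_one]
          have hRd : R / (N:ℝ) ≤ 2 := by
            rw [div_le_iff₀ hNpos]; linarith
          have hRdnn : (0:ℝ) ≤ R / (N:ℝ) := div_nonneg hR0.le hNpos.le
          have e : 2/5 * (R ^ ((5:ℝ)/2) / δ) * ((δ:ℝ)/N) = 2/5 * (R/(N:ℝ)) * R ^ ((3:ℝ)/2) := by
            rw [hR52R]; field_simp
          rw [e]
          nlinarith
  -- combine
  have htotal : |(∑ d ∈ Finset.Icc 1 N, (1:ℝ)/d *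
        ∑ k ∈ Finset.Icc 1 (N / Nat.lcm d δ), ((k * Nat.lcm d δ : ℕ) : ℝ) ^ ((3:ℝ)/2))
      - Real.pi ^ 2 / 15 * (R ^ ((5:ℝ)/2) / δ) * Sig0|
      ≤ 3 * R ^ ((3:ℝ)/2) * (1 + Real.log R) + R ^ ((3:ℝ)/2) := by
    have := abs_sub_le (∑ d ∈ Finset.Icc 1 N, (1:ℝ)/d *
        ∑ k ∈ Finset.Icc 1 (N / Nat.lcm d δ), ((k * Nat.lcm d δ : ℕ) : ℝ) ^ ((3:ℝ)/2)) M
        (Real.pi ^ 2 / 15 * (R ^ ((5:ℝ)/2) / δ) * Sig0)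
    linarith
  refine htotal.trans ?_
  -- final numeric bound
  have hRε : (1:ℝ) ≤ R ^ ε := by
    have := Real.rpow_le_rpow (by norm_num : (0:ℝ) ≤ 1) hR1 hε.le
    simpa using this
  have hδε : (1:ℝ) ≤ (δ:ℝ) ^ ε := by
    have h1δ : (1:ℝ) ≤ (δ:ℝ) := by exact_mod_cast hδ
    have := Real.rpow_le_rpow (by norm_num : (0:ℝ) ≤ 1) h1δ hε.le
    simpa using this
  have hlogR : Real.log R ≤ R ^ ε / ε := Real.log_le_rpow_div hR0.le hε
  have hsplit : R ^ ((3:ℝ)/2 + ε) = R ^ ((3:ℝ)/2) * R ^ ε := Real.rpow_add hR0 _ _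
  have hlog1 : 1 + Real.log R ≤ (1 + 1/ε) * R ^ ε := by
    have h2 : R ^ ε / ε = (1/ε) * R ^ ε := by ring
    rw [h2] at hlogR
    nlinarith [Real.rpow_nonneg hR0.le ε, one_div_pos.mpr hε]
  have t1 := mul_le_mul_of_nonneg_left hlog1 (by positivity : (0:ℝ) ≤ 3 * R ^ ((3:ℝ)/2))
  have t2 : R ^ ((3:ℝ)/2) ≤ R ^ ((3:ℝ)/2) * R ^ ε := le_mul_of_one_le_right hR32 hRε
  calc 3 * R ^ ((3:ℝ)/2) * (1 + Real.log R) + R ^ ((3:ℝ)/2)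
      ≤ (3*(1+1/ε) + 1) * (R ^ ((3:ℝ)/2) * R ^ ε) := by nlinarith
    _ = (3*(1+1/ε) + 1) * R ^ ((3:ℝ)/2 + ε) := by rw [hsplit]
    _ ≤ (3*(1+1/ε) + 1) * R ^ ((3:ℝ)/2 + ε) * (δ:ℝ) ^ ε :=
        le_mul_of_one_le_right (by positivity) hδε
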